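/- (Connectedness of windmill coordinates) In a composite windmill 𝒲 = (𝒲₁,…,𝒲_m, G_W, j₀), for every i with 𝒲ᵢ ≠ ∅, the set 𝒲ᵢ is connected as a subgraph of the projection complex 𝒫_K(𝕐ᵢ), provided K exceeds the maximum of the convexity constants ℒ. -/

import Mathlib

/-- A composite projection system with `m` coordinates. -/
structure CPS (m : ℕ) where
  Y : Type
  coord : Y → Fin m
  Act : Y → Set Y
  d : Y → Y → Y → ℝ
  κ : ℝ
  Θ : ℝ
  κ_pos : 0 < κ
  κ_le_Θ : κ ≤ Θ
  same_coord_act : ∀ X Z, coord X = coord Z → Z ∈ Act X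
  act_symm : ∀ X Z, X ∈ Act Z ↔ Z ∈ Act X
  d_symm : ∀ y x z, d y x z = d y z x
  d_tri : ∀ y x z w, d y x z + d y z w ≥ d y x w - κ
  behrstock : ∀ y x z, x ∈ Act y → z ∈ Act y → y ∈ Act x → z ∈ Act x →
    min (d y x z) (d x y z) ≤ κ
  inaction : ∀ x z y, x ∉ Act z → y ∈ Act x → y ∈ Act z → d y x z ≤ κ
  properness : ∀ i x z, coord x = i → coord z = i →
    Set.Finite {y | coord y = i ∧ d y x z > Θ}
  finite_filling : ∀ Z : Set Y, ∃ F : Set Y, F.Finite ∧ F ⊆ Z ∧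
    (⋃ X ∈ Z, Act X) ⊆ ⋃ X ∈ F, Act X

/-- Adjacency in the projection complex `𝒫_K(𝕐ᵢ)`: two vertices of coordinate
`i` are joined by an edge iff `𝕐^i_K` between them is empty. -/
def CPS.adj {m : ℕ} (S : CPS m) (i : Fin m) (K : ℝ) (X Z : S.Y) : Prop :=
  ∀ Yv, S.coord Yv = i → X ∈ S.Act Yv → Z ∈ S.Act Yv → ¬ (S.d Yv X Z ≥ K)

/-- Connectedness of windmill coordinates: if `𝒲ᵢ ⊆ 𝕐ᵢ` is convex with constant
`L` in coordinate `i` and `L < K`, then (using the BBF fact that any two vertices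
of `𝒫_K(𝕐ᵢ)` are joined by a path whose interior vertices lie in `𝕐^i_K` of the
endpoints) any two points of `𝒲ᵢ` are joined by a path inside `𝒲ᵢ`. -/
theorem windmill_coordinate_connected {m : ℕ} (S : CPS m) (i : Fin m)
    (K L : ℝ) (hLK : L < K)
    (Wi : Set S.Y) (hWi : ∀ X ∈ Wi, S.coord X = i) (hne : Wi.Nonempty)
    (hconv : ∀ X ∈ Wi, ∀ Z ∈ Wi, ∀ Yv, S.coord Yv = i →
      X ∈ S.Act Yv → Z ∈ S.Act Yv → S.d Yv X Z ≥ L → Yv ∈ Wi)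
    (hBBF : ∀ X X' : S.Y, S.coord X = i → S.coord X' = i →
      Relation.ReflTransGen
        (fun a b =>
          (a = X ∨ a = X' ∨ (S.coord a = i ∧ a ∈ S.Act X ∧ a ∈ S.Act X' ∧
            S.d a X X' ≥ K)) ∧
          (b = X ∨ b = X' ∨ (S.coord b = i ∧ b ∈ S.Act X ∧ b ∈ S.Act X' ∧
            S.d b X X' ≥ K)) ∧ S.adj i K a b) X X') :
    ∀ X ∈ Wi, ∀ X' ∈ Wi,
      Relation.ReflTransGen
        (fun a b => a ∈ Wi ∧ b ∈ Wi ∧ S.adj i K a b) X X' := by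
  intro X hX X' hX'
  have h := hBBF X X' (hWi X hX) (hWi X' hX')
  refine Relation.ReflTransGen.mono ?_ X X' h
  rintro a b ⟨ha, hb, hadj⟩
  have mem : ∀ c, (c = X ∨ c = X' ∨ (S.coord c = i ∧ c ∈ S.Act X ∧ c ∈ S.Act X' ∧
      S.d c X X' ≥ K)) → c ∈ Wi := by
    rintro c (rfl | rfl | ⟨hc, hcX, hcX', hd⟩)
    · exact hX
    · exact hX'
    · exact hconv X hX X' hX' c hc ((S.act_symm X c).mpr hcX) ((S.act_symm X' c).mpr hcX') (le_trans hLK.le hd)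
  exact ⟨mem a ha, mem b hb, hadj⟩
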